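/- In the simplicial setup, if a monomial x^μ y^ν of S is not divisible by any element of N₁, then x^μ = m_b for some b ∈ B_A; consequently x^μ y^ν ∈ M₁ := ∪_{b∈B_A} m_b·M_T. -/

import Mathlib

namespace SimplicialToric

/-- `eVec d α i` is `α` times the `i`-th standard basis vector of `ℕ^d`. -/
def eVec (d α : ℕ) (i : Fin d) : Fin d → ℕ := fun j => if j = i then α else 0

/-- The Hilbert basis of a submonoid `B ⊆ ℕ^d`: the set of irreducible elements
(in `ℕ^d` the only unit is `0`). -/
def Hilb {d : ℕ} (B : AddSubmonoid (Fin d → ℕ)) : Set (Fin d → ℕ) :=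
  {b | b ∈ B ∧ b ≠ 0 ∧ ∀ x ∈ B, ∀ y ∈ B, b = x + y → x = 0 ∨ y = 0}

/-- The submonoid `A = Σᵢ ℤ≥0·eᵢ = αℤ≥0^d`. -/
def Amon (d α : ℕ) : AddSubmonoid (Fin d → ℕ) :=
  AddSubmonoid.closure (Set.range (eVec d α))

/-- `B_A = {x ∈ B : x − a ∉ B for every a ∈ A \ {0}}`. -/
def BA {d : ℕ} (B : AddSubmonoid (Fin d → ℕ)) (α : ℕ) : Set (Fin d → ℕ) :=
  {x | x ∈ B ∧ ∀ z ∈ Amon d α, z ≠ 0 → ∀ y ∈ B, x ≠ y + z}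

/-- The generators `a₁,…,a_c,e₁,…,e_d` of `B`, indexed by the variables of
`S = K[x₁,…,x_c,y₁,…,y_d]`; variable `Fin.castAdd d i` is `xᵢ`, variable
`Fin.natAdd c j` is `yⱼ`. -/
def gens (c d α : ℕ) (a : Fin c → Fin d → ℕ) : Fin (c + d) → Fin d → ℕ :=
  Fin.addCases a (eVec d α)

/-- The element of `B` represented by the monomial with exponent vector `σ`:
`π(x^μ y^ν) = t^(valE σ)`. -/
def valE (c d α : ℕ) (a : Fin c → Fin d → ℕ) (σ : Fin (c + d) →₀ ℕ) : Fin d → ℕ :=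
  ∑ v : Fin (c + d), σ v • gens c d α a v

/-- total degree of a monomial (exponent vector). -/
def degE {N : ℕ} (σ : Fin N →₀ ℕ) : ℕ := ∑ v, σ v

/-- the graded reverse lexicographic order: `grevlex σ τ` means `σ ≺ τ`,
i.e. `deg σ < deg τ`, or degrees agree and the last nonzero entry of `τ − σ`
is negative. -/
def grevlex {N : ℕ} (σ τ : Fin N →₀ ℕ) : Prop :=
  degE σ < degE τ ∨ (degE σ = degE τ ∧ ∃ k, τ k < σ k ∧ ∀ l, k < l → σ l = τ l)

/-- `x ∼ y` iff `x − y ∈ gp(A) = αℤ^d`. -/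
def Rel {d : ℕ} (α : ℕ) (x y : Fin d → ℕ) : Prop :=
  ∀ j, (α : ℤ) ∣ (x j : ℤ) - (y j : ℤ)

/-- `Γ` is an equivalence class of `B_A` modulo `αℤ^d`. -/
def IsClass {d : ℕ} (B : AddSubmonoid (Fin d → ℕ)) (α : ℕ) (Γ : Set (Fin d → ℕ)) : Prop :=
  ∃ x ∈ BA B α, Γ = {y | y ∈ BA B α ∧ Rel α x y}

/-- the total order on an equivalence class of `B_A`: `b ≺ c` iff the last
nonzero entry of `b − c` is negative. -/
def ltCls {d : ℕ} (x y : Fin d → ℕ) : Prop :=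
  ∃ k, x k < y k ∧ ∀ l, k < l → x l = y l

/-- `joinSub x y = x∨y − y`, where `x∨y` is the componentwise maximum. -/
def joinSub {d : ℕ} (x y : Fin d → ℕ) : Fin d → ℕ := fun j => max (x j) (y j) - y j

/-- the monomial with exponents `σ` lies in `T = K[y₁,…,y_d]`. -/
def yOnly (c d : ℕ) (σ : Fin (c + d) →₀ ℕ) : Prop := ∀ i : Fin c, σ (Fin.castAdd d i) = 0

/-- the monomial with exponents `σ` involves only the `x`-variables. -/
def xOnly (c d : ℕ) (σ : Fin (c + d) →₀ ℕ) : Prop := ∀ j : Fin d, σ (Fin.natAdd c j) = 0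

/-- the set `N₁`, for a given choice `m` of the minimal monomials `m_b`. -/
def N1set (c d α : ℕ) (a : Fin c → Fin d → ℕ) (B : AddSubmonoid (Fin d → ℕ))
    (m : (Fin d → ℕ) → (Fin (c + d) →₀ ℕ)) : Set (Fin (c + d) →₀ ℕ) :=
  {n | ∃ (i : Fin c) (b : Fin d → ℕ), b ∈ BA B α ∧
    n = Finsupp.single (Fin.castAdd d i) 1 + m b ∧ n ≠ m (a i + b)}

/-- the set `N₂ = ∪_Γ N_Γ`, where `N_Γ = {n(bᵢ,bⱼ) = m_{bⱼ}·m_{bᵢ∨bⱼ−bⱼ} : bᵢ ≺ bⱼ in Γ}`. -/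
def N2set {d : ℕ} (c α : ℕ) (B : AddSubmonoid (Fin d → ℕ))
    (m : (Fin d → ℕ) → (Fin (c + d) →₀ ℕ)) : Set (Fin (c + d) →₀ ℕ) :=
  {n | ∃ Γ, IsClass B α Γ ∧ ∃ bi ∈ Γ, ∃ bj ∈ Γ, ltCls bi bj ∧ n = m bj + m (joinSub bi bj)}

/-- `σ` is the exponent vector of the initial (i.e. `≺`-largest) term of `f`. -/
def IsLeadMon {N : ℕ} {K : Type*} [Field K] (f : MvPolynomial (Fin N) K)
    (σ : Fin N →₀ ℕ) : Prop :=
  σ ∈ f.support ∧ ∀ τ ∈ f.support, τ = σ ∨ grevlex τ σ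

/-- the initial ideal of `I` with respect to the graded reverse lexicographic order. -/
noncomputable def initialIdeal {N : ℕ} {K : Type*} [Field K] (I : Ideal (MvPolynomial (Fin N) K)) :
    Ideal (MvPolynomial (Fin N) K) :=
  Ideal.span {g | ∃ f ∈ I, ∃ σ, IsLeadMon f σ ∧ g = MvPolynomial.monomial σ (1 : K)}

end SimplicialToric

open SimplicialToric

namespace SimplicialToric

/-- the `x`-part `x^μ` of a monomial `x^μ y^ν`. -/
noncomputable def xpart (c d : ℕ) (σ : Fin (c + d) →₀ ℕ) : Fin (c + d) →₀ ℕ :=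
  ∑ i : Fin c, Finsupp.single (Fin.castAdd d i) (σ (Fin.castAdd d i))

/-- the `y`-part `y^ν` of a monomial `x^μ y^ν`. -/
noncomputable def ypart (c d : ℕ) (σ : Fin (c + d) →₀ ℕ) : Fin (c + d) →₀ ℕ :=
  ∑ j : Fin d, Finsupp.single (Fin.natAdd c j) (σ (Fin.natAdd c j))

end SimplicialToric


namespace SimplicialToric

lemma mem_Amon_iff (d α : ℕ) (z : Fin d → ℕ) : z ∈ Amon d α ↔ ∀ j, α ∣ z j := by
  constructor
  · intro hz
    refine AddSubmonoid.closure_induction ?_ ?_ ?_ hz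
    · rintro x ⟨i, rfl⟩ j
      simp only [eVec]
      split <;> simp
    · intro j; simp
    · intro x y _ _ hx hy j
      exact (hx j).add (hy j)
  · intro h
    have : z = ∑ j, (z j / α) • eVec d α j := by
      funext j'
      rw [Finset.sum_apply]
      simp only [Pi.smul_apply, eVec, smul_eq_mul]
      rw [Finset.sum_eq_single j']
      · simp [Nat.div_mul_cancel (h j')]
      · intro b _ hb; simp [Ne.symm hb]
      · simp
    rw [this]
    exact AddSubmonoid.sum_mem _ fun j _ => AddSubmonoid.nsmul_mem _ (AddSubmonoid.subset_closure (Set.mem_range_self j)) _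

lemma sum_gens (c d α : ℕ) (a : Fin c → Fin d → ℕ) (hdeg : ∀ i, ∑ j, a i j = α)
    (v : Fin (c + d)) : ∑ j, gens c d α a v j = α := by
  refine Fin.addCases (fun i => ?_) (fun j' => ?_) v
  · simp [gens, hdeg]
  · simp only [gens, Fin.addCases_right, eVec]
    rw [Finset.sum_eq_single j'] <;> simp +contextual [Ne.symm]

lemma valE_apply (c d α : ℕ) (a : Fin c → Fin d → ℕ) (σ : Fin (c + d) →₀ ℕ) (j : Fin d) :
    valE c d α a σ j = ∑ v, σ v * gens c d α a v j := by
  simp [valE, Finset.sum_apply]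

lemma sum_valE (c d α : ℕ) (a : Fin c → Fin d → ℕ) (hdeg : ∀ i, ∑ j, a i j = α)
    (σ : Fin (c + d) →₀ ℕ) : ∑ j, valE c d α a σ j = α * degE σ := by
  simp only [valE_apply]
  rw [Finset.sum_comm]
  simp only [← Finset.mul_sum, sum_gens c d α a hdeg]
  rw [degE, Finset.mul_sum]
  exact Finset.sum_congr rfl fun v _ => mul_comm _ _

lemma degE_eq_zero_iff {N : ℕ} (σ : Fin N →₀ ℕ) : degE σ = 0 ↔ σ = 0 := by
  constructor
  · intro h
    ext v
    have := Finset.sum_eq_zero_iff.mp h v (Finset.mem_univ v)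
    simpa using this
  · rintro rfl; simp [degE]

lemma degE_add {N : ℕ} (σ τ : Fin N →₀ ℕ) : degE (σ + τ) = degE σ + degE τ := by
  simp [degE, Finset.sum_add_distrib]

lemma degE_eq_of_valE_eq (c d α : ℕ) (hα : 0 < α) (a : Fin c → Fin d → ℕ)
    (hdeg : ∀ i, ∑ j, a i j = α) (σ τ : Fin (c + d) →₀ ℕ)
    (h : valE c d α a σ = valE c d α a τ) : degE σ = degE τ := by
  have h1 := sum_valE c d α a hdeg σ
  have h2 := sum_valE c d α a hdeg τ
  rw [h, h2] at h1
  exact (Nat.eq_of_mul_eq_mul_left hα h1.symm)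

lemma valE_add (c d α : ℕ) (a : Fin c → Fin d → ℕ) (σ τ : Fin (c + d) →₀ ℕ) :
    valE c d α a (σ + τ) = valE c d α a σ + valE c d α a τ := by
  simp [valE, add_smul, Finset.sum_add_distrib]

lemma valE_single (c d α : ℕ) (a : Fin c → Fin d → ℕ) (v : Fin (c + d)) (k : ℕ) :
    valE c d α a (Finsupp.single v k) = k • gens c d α a v := by
  rw [valE, Finset.sum_eq_single v]
  · simp
  · intro b _ hb; simp [Finsupp.single_apply, Ne.symm hb]
  · simp

lemma xpart_apply_cast (c d : ℕ) (σ : Fin (c + d) →₀ ℕ) (i : Fin c) :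
    xpart c d σ (Fin.castAdd d i) = σ (Fin.castAdd d i) := by
  rw [xpart, Finsupp.finset_sum_apply, Finset.sum_eq_single i]
  · simp
  · intro b _ hb; simp [Finsupp.single_apply, Fin.castAdd_inj, hb]
  · simp

lemma xpart_apply_nat (c d : ℕ) (σ : Fin (c + d) →₀ ℕ) (j : Fin d) :
    xpart c d σ (Fin.natAdd c j) = 0 := by
  rw [xpart, Finsupp.finset_sum_apply]
  refine Finset.sum_eq_zero fun i _ => ?_
  rw [Finsupp.single_apply, if_neg]
  intro h
  have := congrArg Fin.val h
  simp [Fin.castAdd, Fin.natAdd] at this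
  omega

lemma ypart_apply_nat (c d : ℕ) (σ : Fin (c + d) →₀ ℕ) (j : Fin d) :
    ypart c d σ (Fin.natAdd c j) = σ (Fin.natAdd c j) := by
  rw [ypart, Finsupp.finset_sum_apply, Finset.sum_eq_single j]
  · simp
  · intro b _ hb
    rw [Finsupp.single_apply, if_neg]
    intro h
    have := congrArg Fin.val h
    simp [Fin.natAdd] at this
    exact hb (Fin.ext this)
  · simp

lemma ypart_apply_cast (c d : ℕ) (σ : Fin (c + d) →₀ ℕ) (i : Fin c) :
    ypart c d σ (Fin.castAdd d i) = 0 := by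
  rw [ypart, Finsupp.finset_sum_apply]
  refine Finset.sum_eq_zero fun j _ => ?_
  rw [Finsupp.single_apply, if_neg]
  intro h
  have := congrArg Fin.val h
  simp [Fin.castAdd, Fin.natAdd] at this
  omega

lemma xpart_add_ypart (c d : ℕ) (σ : Fin (c + d) →₀ ℕ) :
    σ = xpart c d σ + ypart c d σ := by
  ext v
  refine Fin.addCases (fun i => ?_) (fun j => ?_) v <;>
    simp [xpart_apply_cast, xpart_apply_nat, ypart_apply_cast, ypart_apply_nat]

end SimplicialToric


namespace SimplicialToric

lemma degE_single {N : ℕ} (v : Fin N) (k : ℕ) : degE (Finsupp.single v k) = k := by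
  rw [degE, Finset.sum_eq_single v]
  · simp
  · intro b _ hb; simp [Finsupp.single_apply, Ne.symm hb]
  · simp

lemma mem_BA_of_xOnly (c d α : ℕ) (hα : 0 < α) (a : Fin c → Fin d → ℕ)
    (B : AddSubmonoid (Fin d → ℕ))
    (hBgen : B = AddSubmonoid.closure (Set.range a ∪ Set.range (eVec d α)))
    (hdeg : ∀ i, ∑ j, a i j = α)
    (m : (Fin d → ℕ) → (Fin (c + d) →₀ ℕ))
    (hmval : ∀ b ∈ B, valE c d α a (m b) = b)
    (hmmin : ∀ b ∈ B, ∀ σ, valE c d α a σ = b → m b = σ ∨ grevlex (m b) σ)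
    (b : Fin d → ℕ) (hb : b ∈ B) (hx : xOnly c d (m b)) : b ∈ BA B α := by
  refine ⟨hb, ?_⟩
  intro z hz hzne y hy heq
  have hzd : ∀ j, α ∣ z j := (mem_Amon_iff d α z).mp hz
  obtain ⟨j0, hj0⟩ : ∃ j, z j ≠ 0 := by
    by_contra h; push_neg at h; exact hzne (funext h)
  have hαz : α ≤ z j0 := Nat.le_of_dvd (Nat.pos_of_ne_zero hj0) (hzd j0)
  set z' : Fin d → ℕ := fun j => z j - eVec d α j0 j with hz'
  have hz'A : z' ∈ Amon d α := by
    rw [mem_Amon_iff]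
    intro j
    simp only [hz', eVec]
    split
    · exact Nat.dvd_sub (hzd j) dvd_rfl
    · simpa using hzd j
  have hAB : Amon d α ≤ B := by
    rw [hBgen]
    exact AddSubmonoid.closure_mono Set.subset_union_right
  have hb2 : y + z' ∈ B := add_mem hy (hAB hz'A)
  set τ : Fin (c + d) →₀ ℕ := m (y + z') + Finsupp.single (Fin.natAdd c j0) 1 with hτ
  have hvτ : valE c d α a τ = b := by
    rw [hτ, valE_add, hmval _ hb2, valE_single]
    funext j
    have hg : gens c d α a (Fin.natAdd c j0) j = eVec d α j0 j := by
      simp [gens]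
    simp only [Pi.add_apply, one_smul, hg, heq, eVec, hz']
    by_cases hjj : j = j0 <;> simp [hjj] <;> omega
  have hτ0 : τ (Fin.natAdd c j0) ≠ 0 := by
    simp [hτ]
  have hmb0 : m b (Fin.natAdd c j0) = 0 := hx j0
  rcases hmmin b hb τ hvτ with hEq | hgl
  · exact hτ0 (by rw [← hEq, hmb0])
  · rcases hgl with hlt | ⟨hdeq, k, hk1, hk2⟩
    · have : degE (m b) = degE τ :=
        degE_eq_of_valE_eq c d α hα a hdeg _ _ (by rw [hmval b hb, hvτ])
      omega
    · by_cases hik : k < Fin.natAdd c j0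
      · have := hk2 _ hik
        rw [hmb0] at this
        exact hτ0 this.symm
      · have hck : c ≤ k.val := by
          have := Fin.lt_def.not.mp hik
          simp only [Fin.coe_natAdd] at this
          omega
        have hkd : k.val - c < d := by omega
        have hkeq : k = Fin.natAdd c ⟨k.val - c, hkd⟩ := by
          apply Fin.ext
          simp [Fin.coe_natAdd]
          omega
        have : m b k = 0 := by rw [hkeq]; exact hx _
        omega

lemma xonly_eq_mb (c d α : ℕ) (hα : 0 < α) (a : Fin c → Fin d → ℕ)
    (B : AddSubmonoid (Fin d → ℕ))
    (hBgen : B = AddSubmonoid.closure (Set.range a ∪ Set.range (eVec d α)))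
    (hdeg : ∀ i, ∑ j, a i j = α)
    (m : (Fin d → ℕ) → (Fin (c + d) →₀ ℕ))
    (hmval : ∀ b ∈ B, valE c d α a (m b) = b)
    (hmmin : ∀ b ∈ B, ∀ σ, valE c d α a σ = b → m b = σ ∨ grevlex (m b) σ) :
    ∀ N (μ : Fin (c + d) →₀ ℕ), degE μ ≤ N → xOnly c d μ →
      (¬ ∃ n ∈ N1set c d α a B m, ∃ ρ, μ = n + ρ) → ∃ b ∈ BA B α, μ = m b := by
  have base : ∀ μ : Fin (c + d) →₀ ℕ, degE μ = 0 → ∃ b ∈ BA B α, μ = m b := by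
    intro μ h0
    have hμ0 : μ = 0 := (degE_eq_zero_iff μ).mp h0
    have hm0 : m 0 = 0 := by
      have hv : valE c d α a (m 0) = 0 := hmval 0 B.zero_mem
      have hs := sum_valE c d α a hdeg (m 0)
      rw [hv] at hs
      simp only [Pi.zero_apply, Finset.sum_const_zero] at hs
      have : degE (m 0) = 0 := by
        rcases Nat.mul_eq_zero.mp hs.symm with h | h
        · omega
        · exact h
      exact (degE_eq_zero_iff _).mp this
    refine ⟨0, ⟨B.zero_mem, ?_⟩, by rw [hμ0, hm0]⟩
    intro z hz hzne y _ heq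
    obtain ⟨j, hj⟩ : ∃ j, z j ≠ 0 := by
      by_contra h; push_neg at h; exact hzne (funext h)
    have := congrFun heq j
    simp only [Pi.zero_apply, Pi.add_apply] at this
    omega
  intro N
  induction N with
  | zero =>
    intro μ hN _ _
    exact base μ (Nat.le_zero.mp hN)
  | succ N ih =>
    intro μ hN hxμ hdiv
    by_cases h0 : degE μ = 0
    · exact base μ h0
    · obtain ⟨v, hv⟩ : ∃ v, μ v ≠ 0 := by
        by_contra h; push_neg at h
        exact h0 (Finset.sum_eq_zero fun w _ => h w)
      have hvc : v.val < c := by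
        by_contra hvc
        have hkd : v.val - c < d := by omega
        have : v = Fin.natAdd c ⟨v.val - c, hkd⟩ := by
          apply Fin.ext; simp [Fin.coe_natAdd]; omega
        exact hv (this ▸ hxμ ⟨v.val - c, hkd⟩)
      set i : Fin c := ⟨v.val, hvc⟩ with hi
      have hvi : v = Fin.castAdd d i := by
        apply Fin.ext; simp [hi]
      set μ' : Fin (c + d) →₀ ℕ := μ - Finsupp.single v 1 with hμ'
      have hle : Finsupp.single v 1 ≤ μ := by
        rw [Finsupp.le_def]
        intro w
        rw [Finsupp.single_apply]
        split
        · next h => rw [← h]; omega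
        · omega
      have hsum : μ = Finsupp.single v 1 + μ' := (add_tsub_cancel_of_le hle).symm
      have hdegμ : degE μ = 1 + degE μ' := by
        rw [hsum] at h0 ⊢
        rw [degE_add, degE_single]
      have hxμ' : xOnly c d μ' := by
        intro j
        have h1 := hxμ j
        have h2 := DFunLike.congr_fun hsum (Fin.natAdd c j)
        simp only [Finsupp.add_apply] at h2
        omega
      obtain ⟨b, hbBA, hμb⟩ := ih μ' (by omega) hxμ' (by
        rintro ⟨n, hn, ρ, hρ⟩
        exact hdiv ⟨n, hn, ρ + Finsupp.single v 1, by rw [hsum, hρ]; abel⟩)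
      set n : Fin (c + d) →₀ ℕ := Finsupp.single (Fin.castAdd d i) 1 + m b with hn
      have hμn : μ = n := by rw [hsum, hμb, hvi, hn]
      have hnN1 : n ∉ N1set c d α a B m := by
        intro hmem
        exact hdiv ⟨n, hmem, 0, by rw [hμn, add_zero]⟩
      have hnm : n = m (a i + b) := by
        by_contra hne
        exact hnN1 ⟨i, b, hbBA, rfl, hne⟩
      have haiB : a i ∈ B := by
        rw [hBgen]
        exact AddSubmonoid.subset_closure (Or.inl ⟨i, rfl⟩)
      have habB : a i + b ∈ B := add_mem haiB hbBA.1
      have hxm : xOnly c d (m (a i + b)) := by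
        rw [← hnm, ← hμn]; exact hxμ
      exact ⟨a i + b,
        mem_BA_of_xOnly c d α hα a B hBgen hdeg m hmval hmmin _ habB hxm,
        by rw [hμn, hnm]⟩

end SimplicialToric

/-- If a monomial `x^μ y^ν` is not divisible by any element of `N₁`,
then `x^μ = m_b` for some `b ∈ B_A`; consequently `x^μ y^ν ∈ M₁`. -/
theorem xpart_eq_mb_of_not_divisible_by_N1
    (c d α : ℕ) (hα : 0 < α)
    (a : Fin c → Fin d → ℕ) (B : AddSubmonoid (Fin d → ℕ))
    (hBgen : B = AddSubmonoid.closure (Set.range a ∪ Set.range (eVec d α)))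
    (hhilb : Hilb B = Set.range a ∪ Set.range (eVec d α))
    (hdeg : ∀ i, ∑ j, a i j = α)
    (m : (Fin d → ℕ) → (Fin (c + d) →₀ ℕ))
    (hmval : ∀ b ∈ B, valE c d α a (m b) = b)
    (hmmin : ∀ b ∈ B, ∀ σ, valE c d α a σ = b → m b = σ ∨ grevlex (m b) σ) :
    ∀ σ : Fin (c + d) →₀ ℕ, (¬ ∃ n ∈ N1set c d α a B m, ∃ ρ, σ = n + ρ) →
      ∃ b ∈ BA B α, xpart c d σ = m b ∧ σ = m b + ypart c d σ := by
  intro σ hσ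
  have hdivx : ¬ ∃ n ∈ N1set c d α a B m, ∃ ρ, xpart c d σ = n + ρ := by
    rintro ⟨n, hn, ρ, hρ⟩
    refine hσ ⟨n, hn, ρ + ypart c d σ, ?_⟩
    rw [← add_assoc, ← hρ, ← xpart_add_ypart]
  obtain ⟨b, hb, hxb⟩ := xonly_eq_mb c d α hα a B hBgen hdeg m hmval hmmin
    (degE (xpart c d σ)) (xpart c d σ) le_rfl (fun j => xpart_apply_nat c d σ j) hdivx
  exact ⟨b, hb, hxb, by rw [← hxb]; exact xpart_add_ypart c d σ⟩
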